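/- The function d(x, y) = |x − y| / (|x| + |y|) (with d(0,0) := 0) defines a metric on ℝ; in particular it satisfies the triangle inequality d(x, z) ≤ d(x, y) + d(y, z). -/
import Mathlib

noncomputable def smapeDist (x y : ℝ) : ℝ := |x - y| / (|x| + |y|)

lemma smape_nonneg' (x y : ℝ) : 0 ≤ smapeDist x y := by unfold smapeDist; positivity

lemma smape_le_one (x y : ℝ) : smapeDist x y ≤ 1 := by
  unfold smapeDist
  rcases eq_or_ne (|x| + |y|) 0 with h | h
  · simp [h]
  · rw [div_le_one (lt_of_le_of_ne (by positivity) (Ne.symm h))]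
    exact abs_sub x y

lemma smape_eq_one (x y : ℝ) (hne : x ≠ y) (h : x * y ≤ 0) : smapeDist x y = 1 := by
  unfold smapeDist
  have h1 : x ≠ 0 ∨ y ≠ 0 := by
    by_contra hc; push_neg at hc; exact hne (hc.1.trans hc.2.symm)
  have hd : 0 < |x| + |y| := by
    rcases h1 with h1 | h1
    · have := abs_pos.mpr h1; positivity
    · have := abs_pos.mpr h1; positivity
  rw [div_eq_one_iff_eq hd.ne']
  rcases le_or_gt x 0 with hx | hx <;> rcases le_or_gt y 0 with hy | hy
  · have hx0 : x = 0 ∨ y = 0 := by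
      rcases lt_or_eq_of_le hx with hx' | hx'
      · right; nlinarith
      · left; exact hx'
    rcases hx0 with h0 | h0 <;> simp [h0, abs_of_nonpos, hx, hy, abs_neg]
  · rw [abs_of_nonpos hx, abs_of_nonneg hy.le, abs_of_nonpos (by linarith)]; ring
  · rw [abs_of_nonneg hx.le, abs_of_nonpos hy, abs_of_nonneg (by linarith)]; ring
  · nlinarith

lemma smape_pos_tri (x y z : ℝ) (hx : 0 < x) (hy : 0 < y) (hz : 0 < z) :
    smapeDist x z ≤ smapeDist x y + smapeDist y z := by
  unfold smapeDist
  rw [abs_of_pos hx, abs_of_pos hy, abs_of_pos hz]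
  rw [div_add_div _ _ (by positivity : (x + y) ≠ 0) (by positivity : (y + z) ≠ 0),
    div_le_div_iff₀ (by positivity) (by positivity)]
  rcases abs_cases (x - y) with ⟨e1, s1⟩ | ⟨e1, s1⟩ <;>
  rcases abs_cases (y - z) with ⟨e2, s2⟩ | ⟨e2, s2⟩ <;>
  rcases abs_cases (x - z) with ⟨e3, s3⟩ | ⟨e3, s3⟩ <;>
  rw [e1, e2, e3]
  · nlinarith [mul_nonneg (mul_nonneg s1 s2) s3]
  · linarith
  · nlinarith [mul_nonneg (by linarith : (0:ℝ) ≤ z - y)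
      (by positivity : (0:ℝ) ≤ y*z + 3*x*z + 3*x*y + x^2)]
  · nlinarith [mul_nonneg s1 (by positivity : (0:ℝ) ≤ z^2 + 3*y*z + 3*x*z + x*y)]
  · nlinarith [mul_nonneg (by linarith : (0:ℝ) ≤ y - x)
      (by positivity : (0:ℝ) ≤ z^2 + 3*y*z + 3*x*z + x*y)]
  · nlinarith [mul_nonneg s2 (by positivity : (0:ℝ) ≤ y*z + 3*x*z + 3*x*y + x^2)]
  · linarith
  · nlinarith [mul_nonneg (mul_nonneg (by linarith : (0:ℝ) ≤ z - y)
      (by linarith : (0:ℝ) ≤ y - x)) (by linarith : (0:ℝ) ≤ z - x)]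

lemma smape_neg (x y : ℝ) : smapeDist (-x) (-y) = smapeDist x y := by
  unfold smapeDist
  rw [abs_neg, abs_neg, show -x - -y = -(x - y) by ring, abs_neg]

lemma smape_comm (x y : ℝ) : smapeDist x y = smapeDist y x := by
  unfold smapeDist
  rw [abs_sub_comm, add_comm]

lemma smape_self (x : ℝ) : smapeDist x x = 0 := by
  unfold smapeDist; simp

lemma smape_tri (x y z : ℝ) : smapeDist x z ≤ smapeDist x y + smapeDist y z := by
  rcases eq_or_ne x z with rfl | hxz
  · rw [smape_self]
    exact add_nonneg (smape_nonneg' x y) (smape_nonneg' y x)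
  rcases eq_or_ne x y with rfl | hxy
  · simp [smape_self]
  rcases eq_or_ne y z with rfl | hyz
  · simp [smape_self]
  rcases le_or_gt (x * z) 0 with hs | hs
  · -- d x z = 1, and one of the others is 1
    rw [smape_eq_one x z hxz hs]
    rcases le_or_gt (x * y) 0 with h1 | h1
    · rw [smape_eq_one x y hxy h1]
      linarith [smape_nonneg' y z]
    · have h2 : y * z ≤ 0 := by
        by_contra hc; push_neg at hc
        nlinarith [mul_pos h1 hc, sq_nonneg y]
      rw [smape_eq_one y z hyz h2]
      linarith [smape_nonneg' x y]
  · -- x, z same strict sign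
    have hx0 : x ≠ 0 := by rintro rfl; simp at hs
    rcases hx0.lt_or_gt with hx | hx
    · have hz : z < 0 := by nlinarith
      rcases le_or_gt 0 y with hy | hy
      · have h1 : x * y ≤ 0 := mul_nonpos_of_nonpos_of_nonneg hx.le hy
        rw [smape_eq_one x y hxy h1]
        linarith [smape_le_one x z, smape_nonneg' y z]
      · rw [← smape_neg x z, ← smape_neg x y, ← smape_neg y z]
        exact smape_pos_tri (-x) (-y) (-z) (by linarith) (by linarith) (by linarith)
    · have hz : 0 < z := by nlinarith
      rcases le_or_gt y 0 with hy | hy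
      · have h1 : x * y ≤ 0 := mul_nonpos_of_nonneg_of_nonpos hx.le hy
        rw [smape_eq_one x y hxy h1]
        linarith [smape_le_one x z, smape_nonneg' y z]
      · exact smape_pos_tri x y z hx hy hz

/-- `d(x,y) = |x−y|/(|x|+|y|)` (with `d(0,0)=0`) is a metric on `ℝ`. -/
theorem stmt_6 :
    (∀ x y : ℝ, 0 ≤ smapeDist x y) ∧
    (∀ x y : ℝ, smapeDist x y = 0 ↔ x = y) ∧
    (∀ x y : ℝ, smapeDist x y = smapeDist y x) ∧
    (∀ x y z : ℝ, smapeDist x z ≤ smapeDist x y + smapeDist y z) := by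
  refine ⟨smape_nonneg', ?_, smape_comm, smape_tri⟩
  intro x y
  constructor
  · intro h
    by_contra hne
    have h1 : x ≠ 0 ∨ y ≠ 0 := by
      by_contra hc; push_neg at hc; exact hne (hc.1.trans hc.2.symm)
    have hd : 0 < |x| + |y| := by
      rcases h1 with h1 | h1
      · have := abs_pos.mpr h1; positivity
      · have := abs_pos.mpr h1; positivity
    have := abs_pos.mpr (sub_ne_zero.mpr hne)
    unfold smapeDist at h
    have : |x - y| / (|x| + |y|) > 0 := div_pos this hd
    linarith
  · rintro rfl; exact smape_self x
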